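/- arXiv:2010.08889 — 3 statements merged into one kernel-verified Lean document; each statement's English description precedes it below -/
import Mathlib

section
/- For all natural numbers b, m, s with b ≥ 2 and m, s ≥ 1, and all real x, the quantity G_s(x) satisfies the third-order recurrence in s: (s+2)(bx−1)·G_{s+3}(x) + (m(bx−1)(x−1) + bsx(x−2) + bx(x−3) − s(2x−3) − 3x + 5)·G_{s+2}(x) − (x−1)(bmx + bsx + bx + mx − 2m + sx − 3s + x − 4)·G_{s+1}(x) + (x−1)²(m+s+1)·G_s(x) = 0, where G_{s+j}(x) denotes the same expression with s replaced by s+j (and the same b, m, x). -/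
open Finset

/-- The combinatorial binomial coefficient `C(n, j)`, as a real number:
equal to `n.choose j` when `0 ≤ j ≤ n`, and `0` otherwise. -/
noncomputable def C (n j : ℤ) : ℝ :=
  if 0 ≤ j ∧ j ≤ n then (Nat.choose n.toNat j.toNat : ℝ) else 0

/-- The polynomial `G_s(x)` from Wiart–Wong, for parameters `b, m, s`. -/
noncomputable def G (b m s : ℕ) (x : ℝ) : ℝ :=
  ∑ k ∈ Finset.Icc (1 : ℤ) ((m : ℤ) + (s : ℤ) - 1),
    (∑ r ∈ Finset.Icc (1 : ℤ) (s : ℤ),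
        C (s : ℤ) r * C (k - 1) (r - 1) * (((b : ℝ) - 1) / (-(b : ℝ)) ^ r) *
          ∑ i ∈ Finset.Icc (0 : ℤ) (r - 1 - max (k - (m : ℤ)) 0),
            (-(b : ℝ)) ^ i * C (r - 1) i) *
      ((b : ℝ) * x) ^ k

lemma C_of_neg {n j : ℤ} (h : j < 0) : C n j = 0 := by
  unfold C; rw [if_neg (by omega)]

lemma C_of_gt {n j : ℤ} (h : n < j) : C n j = 0 := by
  unfold C; rw [if_neg (by omega)]

lemma C_eq_choose {n j : ℤ} (hn : 0 ≤ n) (hj : 0 ≤ j) :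
    C n j = (Nat.choose n.toNat j.toNat : ℝ) := by
  by_cases h : j ≤ n
  · simp only [C, if_pos (⟨hj, h⟩ : 0 ≤ j ∧ j ≤ n)]
  · rw [C_of_gt (by omega)]
    rw [Nat.choose_eq_zero_of_lt (by omega)]
    simp

lemma C_pascal {n : ℤ} (hn : 0 ≤ n) (j : ℤ) : C (n+1) j = C n j + C n (j-1) := by
  rcases lt_or_ge j 0 with h | h
  · rw [C_of_neg h, C_of_neg h, C_of_neg (by omega)]; ring
  rcases eq_or_lt_of_le h with h0 | h0
  · rw [← h0]
    rw [C_eq_choose (by omega) le_rfl, C_eq_choose hn le_rfl, C_of_neg (by omega)]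
    simp
  · rw [C_eq_choose (by omega) h, C_eq_choose hn h, C_eq_choose hn (by omega)]
    have h1 : j.toNat = (j-1).toNat + 1 := by omega
    have h2 : (n+1).toNat = n.toNat + 1 := by omega
    rw [h1, h2, Nat.choose_succ_succ']
    push_cast
    ring

lemma C_symm {n : ℤ} (hn : 0 ≤ n) (j : ℤ) : C n j = C n (n - j) := by
  rcases lt_or_ge j 0 with h | h
  · rw [C_of_neg h, C_of_gt (by omega)]
  rcases le_or_gt j n with h2 | h2
  · rw [C_eq_choose hn h, C_eq_choose hn (by omega)]
    have : (n - j).toNat = n.toNat - j.toNat := by omega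
    rw [this, Nat.choose_symm (by omega)]
  · rw [C_of_gt h2, C_of_neg (by omega)]

lemma C_mul {n j : ℤ} (hn : 0 ≤ n) (hj : 0 ≤ j) (i : ℤ) :
    C n i * C i j = C n j * C (n - j) (i - j) := by
  rcases lt_or_ge i j with h | h
  · rw [C_of_gt h, C_of_neg (show i - j < 0 by omega)]; ring
  rcases le_or_gt i n with h2 | h2
  · have hi : 0 ≤ i := le_trans hj h
    rw [C_eq_choose hn hi, C_eq_choose hi hj, C_eq_choose hn hj,
      C_eq_choose (by omega) (by omega)]
    have e1 : (n - j).toNat = n.toNat - j.toNat := by omega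
    have e2 : (i - j).toNat = i.toNat - j.toNat := by omega
    rw [e1, e2, ← Nat.cast_mul, ← Nat.cast_mul, Nat.choose_mul (by omega)]
  · rw [C_of_gt h2, C_of_gt (show n - j < i - j by omega)]; ring

lemma Icc_sum_top {a U : ℤ} (h : a ≤ U + 1) (f : ℤ → ℝ) :
    ∑ i ∈ Icc a (U+1), f i = (∑ i ∈ Icc a U, f i) + f (U+1) := by
  have : Icc a (U+1) = insert (U+1) (Icc a U) := by
    ext x; simp only [mem_Icc, mem_insert]; omega
  rw [this, Finset.sum_insert (by simp)]
  ring

lemma sum_shift_map (a b : ℤ) (f : ℤ → ℝ) :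
    ∑ i ∈ Icc (a+1) (b+1), f i = ∑ i ∈ Icc a b, f (i+1) := by
  rw [← map_add_right_Icc a b 1, Finset.sum_map]
  rfl

lemma sum_shift_mul {y : ℝ} (hy : y ≠ 0) {n : ℤ} (U : ℤ) :
    ∑ i ∈ Icc (0:ℤ) U, y^i * C n (i-1) = y * ∑ i ∈ Icc (0:ℤ) (U-1), y^i * C n i := by
  rcases lt_or_ge U 0 with h | h
  · rw [Finset.Icc_eq_empty (by omega), Finset.Icc_eq_empty (by omega)]
    simp
  · have h1 : Icc (0:ℤ) U = insert 0 (Icc 1 U) := by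
      ext x; simp only [mem_Icc, mem_insert]; omega
    rw [h1, Finset.sum_insert (by simp)]
    rw [C_of_neg (show (0:ℤ)-1 < 0 by omega)]
    rw [show Icc (1:ℤ) U = Icc ((0:ℤ)+1) ((U-1)+1) by norm_num]
    rw [sum_shift_map]
    rw [Finset.mul_sum]
    rw [mul_zero, zero_add]
    apply Finset.sum_congr rfl
    intro i hi
    simp only [mem_Icc] at hi
    rw [zpow_add_one₀ hy]
    have : i + 1 - 1 = i := by ring
    rw [this]
    ring

lemma masterS {y : ℝ} (hy : y ≠ 0) {n : ℤ} (hn : 0 ≤ n) (U : ℤ) :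
    ∑ i ∈ Icc (0:ℤ) U, y^i * C (n+1) i
      = (1+y) * (∑ i ∈ Icc (0:ℤ) U, y^i * C n i) - y^(U+1) * C n U := by
  have step : ∀ i ∈ Icc (0:ℤ) U, y^i * C (n+1) i = y^i * C n i + y^i * C n (i-1) := by
    intro i _
    rw [C_pascal hn]
    ring
  rw [Finset.sum_congr rfl step, Finset.sum_add_distrib, sum_shift_mul hy]
  rcases lt_or_ge U 0 with h | h
  · rw [Finset.Icc_eq_empty (by omega), Finset.Icc_eq_empty (by omega),
      C_of_neg (show U < 0 from h)]
    simp
  · have h3 : U = (U-1) + 1 := by ring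
    have : ∑ i ∈ Icc (0:ℤ) U, y^i * C n i
        = (∑ i ∈ Icc (0:ℤ) (U-1), y^i * C n i) + y^U * C n U := by
      rw [h3, Icc_sum_top (by omega)]
      rw [← h3]
    rw [this]
    rw [zpow_add_one₀ hy]
    ring

lemma vander (s mm : ℕ) (t : ℤ) :
    ∑ p ∈ Icc (0:ℤ) (s:ℤ), C (s:ℤ) p * C (mm:ℤ) (t - p) = C ((s:ℤ)+(mm:ℤ)) t := by
  induction s generalizing t with
  | zero =>
    simp only [Nat.cast_zero, Finset.Icc_self, Finset.sum_singleton]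
    rw [C_eq_choose le_rfl le_rfl]
    simp
  | succ s ih =>
    have hcast : ((s+1 : ℕ) : ℤ) = (s:ℤ) + 1 := by push_cast; ring
    rw [hcast]
    have step : ∀ p ∈ Icc (0:ℤ) ((s:ℤ)+1),
        C ((s:ℤ)+1) p * C (mm:ℤ) (t - p)
          = C (s:ℤ) p * C (mm:ℤ) (t - p) + C (s:ℤ) (p-1) * C (mm:ℤ) (t - p) := by
      intro p _
      rw [C_pascal (by positivity)]
      ring
    rw [Finset.sum_congr rfl step, Finset.sum_add_distrib]
    have e1 : ∑ p ∈ Icc (0:ℤ) ((s:ℤ)+1), C (s:ℤ) p * C (mm:ℤ) (t - p)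
        = C ((s:ℤ)+(mm:ℤ)) t := by
      rw [Icc_sum_top (by positivity), C_of_gt (show (s:ℤ) < (s:ℤ)+1 by omega)]
      rw [ih t]
      ring
    have e2 : ∑ p ∈ Icc (0:ℤ) ((s:ℤ)+1), C (s:ℤ) (p-1) * C (mm:ℤ) (t - p)
        = C ((s:ℤ)+(mm:ℤ)) (t-1) := by
      have h1 : Icc (0:ℤ) ((s:ℤ)+1) = insert 0 (Icc 1 ((s:ℤ)+1)) := by
        ext x; simp only [mem_Icc, mem_insert]; omega
      rw [h1, Finset.sum_insert (by simp), C_of_neg (show (0:ℤ)-1 < 0 by omega)]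
      rw [show Icc (1:ℤ) ((s:ℤ)+1) = Icc ((0:ℤ)+1) ((s:ℤ)+1) by norm_num]
      rw [sum_shift_map]
      have : ∀ p ∈ Icc (0:ℤ) (s:ℤ),
          C (s:ℤ) (p+1-1) * C (mm:ℤ) (t - (p+1)) = C (s:ℤ) p * C (mm:ℤ) ((t-1) - p) := by
        intro p _
        have e : p+1-1 = p := by ring
        have e' : t - (p+1) = (t-1) - p := by ring
        rw [e, e']
      rw [Finset.sum_congr rfl this, ih (t-1)]
      ring
    rw [e1, e2, ← C_pascal (by positivity) t]
    congr 1
    ring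

lemma binom (n : ℕ) {z : ℝ} (hz : z ≠ 0) :
    ∑ t ∈ Icc (0:ℤ) (n:ℤ), C (n:ℤ) t * z^t = (1+z)^n := by
  induction n with
  | zero =>
    simp only [Nat.cast_zero, Finset.Icc_self, Finset.sum_singleton, pow_zero]
    rw [C_eq_choose le_rfl le_rfl]
    simp
  | succ n ih =>
    have hcast : ((n+1 : ℕ) : ℤ) = (n:ℤ) + 1 := by push_cast; ring
    rw [hcast]
    have step : ∀ t ∈ Icc (0:ℤ) ((n:ℤ)+1),
        C ((n:ℤ)+1) t * z^t = z^t * C (n:ℤ) t + z^t * C (n:ℤ) (t-1) := by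
      intro t _
      rw [C_pascal (by positivity)]
      ring
    rw [Finset.sum_congr rfl step, Finset.sum_add_distrib, sum_shift_mul hz]
    have e0 : (n:ℤ) + 1 - 1 = (n:ℤ) := by ring
    rw [e0]
    have e1 : ∑ t ∈ Icc (0:ℤ) ((n:ℤ)+1), z^t * C (n:ℤ) t = (1+z)^n := by
      rw [Icc_sum_top (by positivity), C_of_gt (show (n:ℤ) < (n:ℤ)+1 by omega)]
      rw [← ih]
      rw [mul_zero, add_zero]
      apply Finset.sum_congr rfl
      intro t _
      ring
    have e2 : ∑ t ∈ Icc (0:ℤ) (n:ℤ), z^t * C (n:ℤ) t = (1+z)^n := by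
      rw [← ih]
      apply Finset.sum_congr rfl
      intro t _
      ring
    rw [e1, e2, pow_succ]
    ring

noncomputable def Wf (b m : ℕ) (r k : ℤ) : ℝ :=
  ∑ i ∈ Finset.Icc (0 : ℤ) (r - 1 - max (k - (m : ℤ)) 0), (-(b : ℝ)) ^ i * C (r - 1) i

noncomputable def Af (b m s : ℕ) (k : ℤ) : ℝ :=
  ∑ r ∈ Finset.Icc (1 : ℤ) (s : ℤ),
    C (s : ℤ) r * C (k - 1) (r - 1) * (((b : ℝ) - 1) / (-(b : ℝ)) ^ r) * Wf b m r k

noncomputable def Bf (b m s : ℕ) (k : ℤ) : ℝ :=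
  ∑ p ∈ Finset.Icc (0 : ℤ) (s : ℤ),
    C (s : ℤ) p * C (k - 1) p * (1 / (-(b : ℝ)) ^ (p+1)) * Wf b m (p+1) k

noncomputable def Ef (b m s : ℕ) (k : ℤ) : ℝ :=
  ∑ p ∈ Finset.Icc (0 : ℤ) (s : ℤ),
    C (s : ℤ) p * C (k - 1) (p+1) * (1 / (-(b : ℝ)) ^ (p+2)) * Wf b m (p+2) k

lemma G_eq (b m s : ℕ) (x : ℝ) :
    G b m s x = ∑ k ∈ Finset.Icc (1 : ℤ) ((m : ℤ) + (s : ℤ) - 1),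
      Af b m s k * ((b : ℝ) * x) ^ k := rfl

lemma Wf_empty {b m : ℕ} {r k : ℤ} (h : r - 1 - max (k - (m:ℤ)) 0 < 0) : Wf b m r k = 0 := by
  unfold Wf
  rw [Finset.Icc_eq_empty (by omega)]
  simp

lemma Af_zero_lo {b m s : ℕ} {k : ℤ} (h : k ≤ 0) : Af b m s k = 0 := by
  unfold Af
  apply Finset.sum_eq_zero
  intro r hr
  simp only [Finset.mem_Icc] at hr
  rw [C_of_gt (show k - 1 < r - 1 by omega)]
  ring

lemma Af_zero_hi {b m s : ℕ} {k : ℤ} (h : (m:ℤ) + s ≤ k) : Af b m s k = 0 := by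
  unfold Af
  apply Finset.sum_eq_zero
  intro r hr
  simp only [Finset.mem_Icc] at hr
  rw [Wf_empty (by omega)]
  ring

lemma Bf_zero_lo {b m s : ℕ} {k : ℤ} (h : k ≤ 0) : Bf b m s k = 0 := by
  unfold Bf
  apply Finset.sum_eq_zero
  intro p hp
  simp only [Finset.mem_Icc] at hp
  rw [C_of_gt (show k - 1 < p by omega)]
  ring

lemma Bf_zero_hi {b m s : ℕ} {k : ℤ} (h : (m:ℤ) + s + 1 ≤ k) : Bf b m s k = 0 := by
  unfold Bf
  apply Finset.sum_eq_zero
  intro p hp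
  simp only [Finset.mem_Icc] at hp
  rw [Wf_empty (by omega)]
  ring

lemma Ef_zero_lo {b m s : ℕ} {k : ℤ} (h : k ≤ 1) : Ef b m s k = 0 := by
  unfold Ef
  apply Finset.sum_eq_zero
  intro p hp
  simp only [Finset.mem_Icc] at hp
  rw [C_of_gt (show k - 1 < p + 1 by omega)]
  ring

lemma Ef_zero_hi {b m s : ℕ} {k : ℤ} (h : (m:ℤ) + s + 2 ≤ k) : Ef b m s k = 0 := by
  unfold Ef
  apply Finset.sum_eq_zero
  intro p hp
  simp only [Finset.mem_Icc] at hp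
  rw [Wf_empty (by omega)]
  ring

lemma A_succ (b m s : ℕ) (k : ℤ) :
    Af b m (s+1) k = Af b m s k + ((b:ℝ) - 1) * Bf b m s k := by
  unfold Af Bf
  have hcast : ((s+1 : ℕ) : ℤ) = (s:ℤ) + 1 := by push_cast; ring
  rw [hcast]
  have step : ∀ r ∈ Finset.Icc (1:ℤ) ((s:ℤ)+1),
      C ((s:ℤ)+1) r * C (k-1) (r-1) * (((b : ℝ) - 1) / (-(b : ℝ)) ^ r) * Wf b m r k
        = C (s:ℤ) r * C (k-1) (r-1) * (((b : ℝ) - 1) / (-(b : ℝ)) ^ r) * Wf b m r k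
          + C (s:ℤ) (r-1) * C (k-1) (r-1) * (((b : ℝ) - 1) / (-(b : ℝ)) ^ r) * Wf b m r k := by
    intro r _
    rw [C_pascal (by positivity)]
    ring
  rw [Finset.sum_congr rfl step, Finset.sum_add_distrib]
  congr 1
  · rw [Icc_sum_top (by omega), C_of_gt (show (s:ℤ) < (s:ℤ)+1 by omega)]
    ring
  · rw [show Finset.Icc (1:ℤ) ((s:ℤ)+1) = Finset.Icc ((0:ℤ)+1) ((s:ℤ)+1) by norm_num]
    rw [sum_shift_map]
    rw [Finset.mul_sum]
    apply Finset.sum_congr rfl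
    intro p _
    have e1 : p + 1 - 1 = p := by ring
    rw [e1]
    ring

lemma B_succ (b m s : ℕ) (k : ℤ) :
    Bf b m (s+1) k = Bf b m s k + Ef b m s k := by
  unfold Bf Ef
  have hcast : ((s+1 : ℕ) : ℤ) = (s:ℤ) + 1 := by push_cast; ring
  rw [hcast]
  have step : ∀ p ∈ Finset.Icc (0:ℤ) ((s:ℤ)+1),
      C ((s:ℤ)+1) p * C (k-1) p * (1 / (-(b : ℝ)) ^ (p+1)) * Wf b m (p+1) k
        = C (s:ℤ) p * C (k-1) p * (1 / (-(b : ℝ)) ^ (p+1)) * Wf b m (p+1) k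
          + C (s:ℤ) (p-1) * C (k-1) p * (1 / (-(b : ℝ)) ^ (p+1)) * Wf b m (p+1) k := by
    intro p _
    rw [C_pascal (by positivity)]
    ring
  rw [Finset.sum_congr rfl step, Finset.sum_add_distrib]
  congr 1
  · rw [Icc_sum_top (by omega), C_of_gt (show (s:ℤ) < (s:ℤ)+1 by omega)]
    ring
  · have h1 : Finset.Icc (0:ℤ) ((s:ℤ)+1) = insert 0 (Finset.Icc 1 ((s:ℤ)+1)) := by
      ext x; simp only [Finset.mem_Icc, Finset.mem_insert]; omega
    rw [h1, Finset.sum_insert (by simp), C_of_neg (show (0:ℤ)-1 < 0 by omega)]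
    rw [show Finset.Icc (1:ℤ) ((s:ℤ)+1) = Finset.Icc ((0:ℤ)+1) ((s:ℤ)+1) by norm_num]
    rw [sum_shift_map]
    rw [zero_mul, zero_mul, zero_mul, zero_add]
    apply Finset.sum_congr rfl
    intro p _
    have e1 : p + 1 - 1 = p := by ring
    rw [e1]
    have e2 : p + 1 + 1 = p + 2 := by ring
    rw [e2]

lemma Tbracket_hi (b m : ℕ) (hb : 2 ≤ b) (hm : 1 ≤ m) {k : ℤ} (hk : (m:ℤ)+1 ≤ k)
    {p : ℤ} (hp : 0 ≤ p) :
    C (k-1) (p+1) * Wf b m (p+2) k - C (k-2) (p+1) * Wf b m (p+2) (k-1)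
      + ((b:ℝ)-1) * (C (k-2) p * Wf b m (p+1) (k-1))
    = -((-(b:ℝ))^(p+2-(k-(m:ℤ)))) * (C (k-2) ((m:ℤ)-1) * C (m:ℤ) (p+2-(k-(m:ℤ)))) := by
  have hy : (-(b:ℝ)) ≠ 0 := by
    have : (2:ℝ) ≤ (b:ℝ) := by exact_mod_cast hb
    intro h; nlinarith [neg_eq_zero.mp h]
  set c : ℤ := k - (m:ℤ) with hc
  have hc1 : 1 ≤ c := by omega
  have hW1 : Wf b m (p+2) k = ∑ i ∈ Finset.Icc (0:ℤ) (p+1-c), (-(b:ℝ))^i * C (p+1) i := by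
    unfold Wf
    rw [max_eq_left (show (0:ℤ) ≤ k - (m:ℤ) by omega)]
    rw [show p+2-1-(k-(m:ℤ)) = p+1-c by omega, show p+2-1 = p+1 by ring]
  have hW2 : Wf b m (p+2) (k-1) = ∑ i ∈ Finset.Icc (0:ℤ) (p+2-c), (-(b:ℝ))^i * C (p+1) i := by
    unfold Wf
    rw [max_eq_left (show (0:ℤ) ≤ k - 1 - (m:ℤ) by omega)]
    rw [show p+2-1-(k-1-(m:ℤ)) = p+2-c by omega, show p+2-1 = p+1 by ring]
  have hW3 : Wf b m (p+1) (k-1) = ∑ i ∈ Finset.Icc (0:ℤ) (p+1-c), (-(b:ℝ))^i * C p i := by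
    unfold Wf
    rw [max_eq_left (show (0:ℤ) ≤ k - 1 - (m:ℤ) by omega)]
    rw [show p+1-1-(k-1-(m:ℤ)) = p+1-c by omega, show p+1-1 = p by ring]
  have hS1 : Wf b m (p+2) (k-1)
      = Wf b m (p+2) k + (-(b:ℝ))^(p+2-c) * C (p+1) (p+2-c) := by
    rcases le_or_gt c (p+2) with h | h
    · rw [hW1, hW2, show p+2-c = (p+1-c)+1 by ring, Icc_sum_top (by omega)]
    · rw [hW1, hW2, Finset.Icc_eq_empty (by omega), Finset.Icc_eq_empty (by omega),
        C_of_neg (show p+2-c < 0 by omega)]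
      simp
  have hS2 : Wf b m (p+2) k
      = (1 + (-(b:ℝ))) * Wf b m (p+1) (k-1) - (-(b:ℝ))^(p+2-c) * C p (p+1-c) := by
    rw [hW1, hW3, masterS hy hp (p+1-c), show p+1-c+1 = p+2-c by ring]
  have hPas : C (k-1) (p+1) = C (k-2) (p+1) + C (k-2) p := by
    rw [show k-1 = (k-2)+1 by ring, C_pascal (show (0:ℤ) ≤ k-2 by omega),
      show p+1-1 = p by ring]
  have hA : C (p+1) (p+2-c) = C (p+1) (c-1) := by
    rw [C_symm (show (0:ℤ) ≤ p+1 by omega) (p+2-c), show p+1-(p+2-c) = c-1 by ring]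
  have hA' : C p (p+1-c) = C p (c-1) := by
    rw [C_symm (show (0:ℤ) ≤ p by omega) (p+1-c), show p-(p+1-c) = c-1 by ring]
  have hM1 : C (k-2) (p+1) * C (p+1) (c-1)
      = C (k-2) (c-1) * C ((m:ℤ)-1) (p+2-c) := by
    rw [C_mul (show (0:ℤ) ≤ k-2 by omega) (show (0:ℤ) ≤ c-1 by omega) (p+1),
      show k-2-(c-1) = (m:ℤ)-1 by omega, show p+1-(c-1) = p+2-c by ring]
  have hM2 : C (k-2) p * C p (c-1) = C (k-2) (c-1) * C ((m:ℤ)-1) (p+1-c) := by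
    rw [C_mul (show (0:ℤ) ≤ k-2 by omega) (show (0:ℤ) ≤ c-1 by omega) p,
      show k-2-(c-1) = (m:ℤ)-1 by omega, show p-(c-1) = p+1-c by ring]
  have hPm : C (m:ℤ) (p+2-c) = C ((m:ℤ)-1) (p+2-c) + C ((m:ℤ)-1) (p+1-c) := by
    have h := C_pascal (show (0:ℤ) ≤ (m:ℤ)-1 by omega) (p+2-c)
    rw [show ((m:ℤ)-1)+1 = (m:ℤ) by ring, show p+2-c-1 = p+1-c by ring] at h
    exact h
  have hSy : C (k-2) (c-1) = C (k-2) ((m:ℤ)-1) := by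
    rw [C_symm (show (0:ℤ) ≤ k-2 by omega) (c-1), show k-2-(c-1) = (m:ℤ)-1 by omega]
  rw [hS1, hS2, hPas, hA, hA', hPm]
  linear_combination (-((-(b:ℝ))^(p+2-c))) * hM1 + (-((-(b:ℝ))^(p+2-c))) * hM2
    + (-((-(b:ℝ))^(p+2-c))) * (C ((m:ℤ)-1) (p+2-c) + C ((m:ℤ)-1) (p+1-c)) * hSy

lemma Tbracket_lo (b m : ℕ) (hb : 2 ≤ b) (hm : 1 ≤ m) {k : ℤ} (hk : k ≤ (m:ℤ))
    {p : ℤ} (hp : 0 ≤ p) :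
    C (k-1) (p+1) * Wf b m (p+2) k - C (k-2) (p+1) * Wf b m (p+2) (k-1)
      + ((b:ℝ)-1) * (C (k-2) p * Wf b m (p+1) (k-1)) = 0 := by
  have hy : (-(b:ℝ)) ≠ 0 := by
    have : (2:ℝ) ≤ (b:ℝ) := by exact_mod_cast hb
    intro h; nlinarith [neg_eq_zero.mp h]
  rcases le_or_gt k 1 with h1 | h1
  · rw [C_of_gt (show k-1 < p+1 by omega), C_of_gt (show k-2 < p+1 by omega),
      C_of_gt (show k-2 < p by omega)]
    ring
  · have hW1 : Wf b m (p+2) k = ∑ i ∈ Finset.Icc (0:ℤ) (p+1), (-(b:ℝ))^i * C (p+1) i := by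
      unfold Wf
      rw [max_eq_right (show k - (m:ℤ) ≤ 0 by omega)]
      rw [show p+2-1-0 = p+1 by ring, show p+2-1 = p+1 by ring]
    have hW2 : Wf b m (p+2) (k-1) = ∑ i ∈ Finset.Icc (0:ℤ) (p+1), (-(b:ℝ))^i * C (p+1) i := by
      unfold Wf
      rw [max_eq_right (show k - 1 - (m:ℤ) ≤ 0 by omega)]
      rw [show p+2-1-0 = p+1 by ring, show p+2-1 = p+1 by ring]
    have hW3 : Wf b m (p+1) (k-1) = ∑ i ∈ Finset.Icc (0:ℤ) p, (-(b:ℝ))^i * C p i := by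
      unfold Wf
      rw [max_eq_right (show k - 1 - (m:ℤ) ≤ 0 by omega)]
      rw [show p+1-1-0 = p by ring, show p+1-1 = p by ring]
    have hPas : C (k-1) (p+1) = C (k-2) (p+1) + C (k-2) p := by
      rw [show k-1 = (k-2)+1 by ring, C_pascal (show (0:ℤ) ≤ k-2 by omega),
        show p+1-1 = p by ring]
    have hS2 : Wf b m (p+2) k = (1 + (-(b:ℝ))) * Wf b m (p+1) (k-1) := by
      rw [hW1, hW3, masterS hy hp (p+1), Icc_sum_top (show (0:ℤ) ≤ p+1 by omega),
        C_of_gt (show p < p+1 by omega)]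
      ring
    have hEq : Wf b m (p+2) (k-1) = Wf b m (p+2) k := by rw [hW1, hW2]
    rw [hEq, hPas, hS2]
    ring

lemma key_k (b m s : ℕ) (hb : 2 ≤ b) (hm : 1 ≤ m) (k : ℤ) :
    (b:ℝ) * Ef b m s k - (b:ℝ) * Ef b m s (k-1) - ((b:ℝ)-1) * Bf b m s (k-1)
    = C ((m:ℤ)+(s:ℤ)) ((m:ℤ)-1) * (-(b:ℝ))^((m:ℤ)+1-k) * C ((s:ℤ)+1) (k-(m:ℤ)-1) := by
  have hy : (-(b:ℝ)) ≠ 0 := by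
    have : (2:ℝ) ≤ (b:ℝ) := by exact_mod_cast hb
    intro h; nlinarith [neg_eq_zero.mp h]
  have hinv : ∀ q : ℤ, (1:ℝ)/(-(b:ℝ))^q = (-(b:ℝ))^(-q) := by
    intro q
    rw [one_div]
    exact (zpow_neg _ _).symm
  unfold Ef Bf
  rw [Finset.mul_sum, Finset.mul_sum, Finset.mul_sum, ← Finset.sum_sub_distrib,
    ← Finset.sum_sub_distrib]
  rcases le_or_gt k (m:ℤ) with hk | hk
  · rw [C_of_neg (show k-(m:ℤ)-1 < 0 by omega), mul_zero]
    apply Finset.sum_eq_zero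
    intro p hp
    simp only [Finset.mem_Icc] at hp
    have hiv : (1:ℝ)/(-(b:ℝ))^(p+1) = (-(b:ℝ)) * (-(b:ℝ))^(-(p+2)) := by
      rw [one_div, ← zpow_neg, show -(p+1) = 1 + (-(p+2)) by ring, zpow_add₀ hy, zpow_one]
    have hbr := Tbracket_lo b m hb hm hk hp.1
    rw [show k-1-1 = k-2 by ring, hiv, hinv (p+2)]
    linear_combination (C (s:ℤ) p * (b:ℝ) * (-(b:ℝ))^(-(p+2))) * hbr
  · have perp : ∀ p ∈ Finset.Icc (0:ℤ) (s:ℤ),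
        ((b:ℝ) * (C (s:ℤ) p * C (k-1) (p+1) * (1/(-(b:ℝ))^(p+2)) * Wf b m (p+2) k)
          - (b:ℝ) * (C (s:ℤ) p * C (k-1-1) (p+1) * (1/(-(b:ℝ))^(p+2)) * Wf b m (p+2) (k-1)))
          - ((b:ℝ)-1) * (C (s:ℤ) p * C (k-1-1) p * (1/(-(b:ℝ))^(p+1)) * Wf b m (p+1) (k-1))
        = (C (k-2) ((m:ℤ)-1) * ((-(b:ℝ)) * (-(b:ℝ))^(-(k-(m:ℤ)))))
            * (C (s:ℤ) p * C (m:ℤ) ((k-2) - p)) := by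
      intro p hp
      simp only [Finset.mem_Icc] at hp
      have hiv : (1:ℝ)/(-(b:ℝ))^(p+1) = (-(b:ℝ)) * (-(b:ℝ))^(-(p+2)) := by
        rw [one_div, ← zpow_neg, show -(p+1) = 1 + (-(p+2)) by ring, zpow_add₀ hy, zpow_one]
      have hbr := Tbracket_hi b m hb hm hk hp.1
      have hsym : C (m:ℤ) (p+2-(k-(m:ℤ))) = C (m:ℤ) ((k-2) - p) := by
        rw [C_symm (show (0:ℤ) ≤ (m:ℤ) by positivity) (p+2-(k-(m:ℤ))),
          show (m:ℤ)-(p+2-(k-(m:ℤ))) = (k-2)-p by ring]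
      rw [hsym] at hbr
      have hmerge : (-(b:ℝ))^(-(p+2)) * (-(b:ℝ))^(p+2-(k-(m:ℤ)))
          = (-(b:ℝ))^(-(k-(m:ℤ))) := by
        rw [← zpow_add₀ hy]
        congr 1
        ring
      rw [show k-1-1 = k-2 by ring, hiv, hinv (p+2)]
      linear_combination (C (s:ℤ) p * (b:ℝ) * (-(b:ℝ))^(-(p+2))) * hbr
        + (-(C (s:ℤ) p * (b:ℝ) * C (k-2) ((m:ℤ)-1) * C (m:ℤ) ((k-2)-p))) * hmerge
    rw [Finset.sum_congr rfl perp, ← Finset.mul_sum, vander s m (k-2)]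
    have hfin : C ((s:ℤ)+(m:ℤ)) (k-2) * C (k-2) ((m:ℤ)-1)
        = C ((s:ℤ)+(m:ℤ)) ((m:ℤ)-1) * C ((s:ℤ)+1) (k-(m:ℤ)-1) := by
      rw [C_mul (show (0:ℤ) ≤ (s:ℤ)+(m:ℤ) by positivity)
        (show (0:ℤ) ≤ (m:ℤ)-1 by omega) (k-2),
        show (s:ℤ)+(m:ℤ)-((m:ℤ)-1) = (s:ℤ)+1 by ring,
        show k-2-((m:ℤ)-1) = k-(m:ℤ)-1 by ring]
    have hexp : (-(b:ℝ))^((m:ℤ)+1-k) = (-(b:ℝ)) * (-(b:ℝ))^(-(k-(m:ℤ))) := by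
      rw [show (m:ℤ)+1-k = 1 + (-(k-(m:ℤ))) by ring, zpow_add₀ hy, zpow_one]
    rw [hexp, show (m:ℤ)+(s:ℤ) = (s:ℤ)+(m:ℤ) by ring]
    linear_combination ((-(b:ℝ)) * (-(b:ℝ))^(-(k-(m:ℤ)))) * hfin

lemma sum_shift_mapc (a b c : ℤ) (f : ℤ → ℝ) :
    ∑ i ∈ Finset.Icc (a+c) (b+c), f i = ∑ i ∈ Finset.Icc a b, f (i+c) := by
  rw [← map_add_right_Icc a b c, Finset.sum_map]
  rfl

lemma shift_sum_poly (f φ : ℤ → ℝ) (N : ℤ) (hN : 1 ≤ N) (h0 : f 0 = 0) (hN2 : f N = 0) :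
    ∑ k ∈ Finset.Icc (1:ℤ) N, f k * φ (k+1) = ∑ k ∈ Finset.Icc (1:ℤ) N, f (k-1) * φ k := by
  have e0 : ∑ k ∈ Finset.Icc (1:ℤ) N, f k * φ (k+1)
      = ∑ k ∈ Finset.Icc (2:ℤ) (N+1), f (k-1) * φ k := by
    rw [show (2:ℤ) = 1+1 by ring, sum_shift_mapc 1 N 1]
    apply Finset.sum_congr rfl
    intro k _
    rw [show k+1-1 = k by ring]
  have e1 : Finset.Icc (1:ℤ) (N+1) = insert 1 (Finset.Icc 2 (N+1)) := by
    ext t; simp only [Finset.mem_Icc, Finset.mem_insert]; omega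
  have e2 : ∑ k ∈ Finset.Icc (1:ℤ) (N+1), f (k-1) * φ k
      = (∑ k ∈ Finset.Icc (1:ℤ) N, f (k-1) * φ k) + f (N+1-1) * φ (N+1) :=
    Icc_sum_top (by omega) _
  have e3 : ∑ k ∈ Finset.Icc (1:ℤ) (N+1), f (k-1) * φ k
      = f (1-1) * φ 1 + ∑ k ∈ Finset.Icc (2:ℤ) (N+1), f (k-1) * φ k := by
    rw [e1, Finset.sum_insert (by simp)]
  rw [e0]
  have h0' : f (1-1) * φ 1 = 0 := by norm_num [h0]
  have hN' : f (N+1-1) * φ (N+1) = 0 := by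
    rw [show N+1-1 = N by ring, hN2, zero_mul]
  linarith [e2.symm.trans e3]

lemma G_zero (b m s : ℕ) : G b m s 0 = 0 := by
  rw [G_eq]
  apply Finset.sum_eq_zero
  intro k hk
  simp only [Finset.mem_Icc] at hk
  rw [mul_zero, zero_zpow k (by omega), mul_zero]

lemma G_ext (b m t : ℕ) (x : ℝ) (N : ℤ) (hN : (m:ℤ)+(t:ℤ)-1 ≤ N) :
    G b m t x = ∑ k ∈ Finset.Icc (1:ℤ) N, Af b m t k * ((b:ℝ)*x)^k := by
  rw [G_eq]
  apply Finset.sum_subset (Finset.Icc_subset_Icc le_rfl hN)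
  intro k hk hk2
  simp only [Finset.mem_Icc] at hk hk2
  rw [Af_zero_hi (by omega), zero_mul]

lemma key2 (b m s : ℕ) (hb : 2 ≤ b) (hm : 1 ≤ m) (x : ℝ) :
    (1-(b:ℝ)*x) * G b m (s+2) x - (2-x-(b:ℝ)*x) * G b m (s+1) x + (1-x) * G b m s x
    = ((b:ℝ)-1) * (b:ℝ)^m * x^(m+1) * C ((m:ℤ)+(s:ℤ)) ((m:ℤ)-1) * (1-x)^(s+1) := by
  have hbR : (b:ℝ) ≠ 0 := by
    have : (2:ℝ) ≤ (b:ℝ) := by exact_mod_cast hb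
    linarith
  by_cases hx : x = 0
  · subst hx
    rw [G_zero, G_zero, G_zero]
    rw [zero_pow (by omega : m+1 ≠ 0)]
    ring
  have hbx : (b:ℝ)*x ≠ 0 := mul_ne_zero hbR hx
  have hy : (-(b:ℝ)) ≠ 0 := by simpa using hbR
  set N : ℤ := (m:ℤ)+(s:ℤ)+2 with hNdef
  have hG0 : G b m s x = ∑ k ∈ Finset.Icc (1:ℤ) N, Af b m s k * ((b:ℝ)*x)^k :=
    G_ext b m s x N (by omega)
  have hG1 : G b m (s+1) x = ∑ k ∈ Finset.Icc (1:ℤ) N,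
      (Af b m s k + ((b:ℝ)-1) * Bf b m s k) * ((b:ℝ)*x)^k := by
    rw [G_ext b m (s+1) x N (by push_cast; omega)]
    apply Finset.sum_congr rfl
    intro k _
    rw [A_succ]
  have hG2 : G b m (s+2) x = ∑ k ∈ Finset.Icc (1:ℤ) N,
      (Af b m s k + ((b:ℝ)-1) * Bf b m s k
        + ((b:ℝ)-1) * (Bf b m s k + Ef b m s k)) * ((b:ℝ)*x)^k := by
    rw [G_ext b m (s+2) x N (by push_cast; omega)]
    apply Finset.sum_congr rfl
    intro k _
    rw [show s+2 = (s+1)+1 by ring, A_succ, A_succ, B_succ]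
  have hshiftE : ∑ k ∈ Finset.Icc (1:ℤ) N, Ef b m s k * ((b:ℝ)*x)^(k+1)
      = ∑ k ∈ Finset.Icc (1:ℤ) N, Ef b m s (k-1) * ((b:ℝ)*x)^k :=
    shift_sum_poly _ _ N (by omega) (Ef_zero_lo (by omega)) (Ef_zero_hi (by omega))
  have hshiftB : ∑ k ∈ Finset.Icc (1:ℤ) N, Bf b m s k * ((b:ℝ)*x)^(k+1)
      = ∑ k ∈ Finset.Icc (1:ℤ) N, Bf b m s (k-1) * ((b:ℝ)*x)^k :=
    shift_sum_poly _ _ N (by omega) (Bf_zero_lo (by omega)) (Bf_zero_hi (by omega))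
  have hstep : ∀ k : ℤ, ((b:ℝ)*x)^(k+1) = ((b:ℝ)*x)^k * ((b:ℝ)*x) :=
    fun k => zpow_add_one₀ hbx k
  -- main collection
  have hcollect : (1-(b:ℝ)*x) * G b m (s+2) x - (2-x-(b:ℝ)*x) * G b m (s+1) x
      + (1-x) * G b m s x
      = ((b:ℝ)-1)/(b:ℝ) * ∑ k ∈ Finset.Icc (1:ℤ) N,
          ((b:ℝ) * Ef b m s k - (b:ℝ) * Ef b m s (k-1) - ((b:ℝ)-1) * Bf b m s (k-1))
            * ((b:ℝ)*x)^k := by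
    rw [hG0, hG1, hG2]
    rw [Finset.mul_sum, Finset.mul_sum, Finset.mul_sum, Finset.mul_sum]
    rw [← Finset.sum_sub_distrib, ← Finset.sum_add_distrib]
    have expand : ∀ k ∈ Finset.Icc (1:ℤ) N,
        ((1-(b:ℝ)*x) * ((Af b m s k + ((b:ℝ)-1) * Bf b m s k
            + ((b:ℝ)-1) * (Bf b m s k + Ef b m s k)) * ((b:ℝ)*x)^k)
          - (2-x-(b:ℝ)*x) * ((Af b m s k + ((b:ℝ)-1) * Bf b m s k) * ((b:ℝ)*x)^k))
          + (1-x) * (Af b m s k * ((b:ℝ)*x)^k)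
        = (((b:ℝ)-1) * (Ef b m s k * ((b:ℝ)*x)^k)
            - ((b:ℝ)-1) * (Ef b m s k * ((b:ℝ)*x)^(k+1))
            - (((b:ℝ)-1)^2/(b:ℝ)) * (Bf b m s k * ((b:ℝ)*x)^(k+1))) := by
      intro k _
      rw [hstep k]
      field_simp
      ring
    rw [Finset.sum_congr rfl expand]
    rw [Finset.sum_sub_distrib, Finset.sum_sub_distrib]
    rw [← Finset.mul_sum, ← Finset.mul_sum, ← Finset.mul_sum]
    rw [hshiftE, hshiftB]
    rw [Finset.mul_sum, Finset.mul_sum, Finset.mul_sum]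
    rw [← Finset.sum_sub_distrib, ← Finset.sum_sub_distrib]
    apply Finset.sum_congr rfl
    intro k _
    field_simp
  rw [hcollect]
  have happ : ∀ k ∈ Finset.Icc (1:ℤ) N,
      ((b:ℝ) * Ef b m s k - (b:ℝ) * Ef b m s (k-1) - ((b:ℝ)-1) * Bf b m s (k-1))
        * ((b:ℝ)*x)^k
      = C ((m:ℤ)+(s:ℤ)) ((m:ℤ)-1)
          * ((-(b:ℝ))^((m:ℤ)+1-k) * C ((s:ℤ)+1) (k-(m:ℤ)-1) * ((b:ℝ)*x)^k) := by
    intro k _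
    rw [key_k b m s hb hm k]
    ring
  rw [Finset.sum_congr rfl happ, ← Finset.mul_sum]
  have hdrop : ∑ k ∈ Finset.Icc (1:ℤ) N,
      (-(b:ℝ))^((m:ℤ)+1-k) * C ((s:ℤ)+1) (k-(m:ℤ)-1) * ((b:ℝ)*x)^k
      = ∑ k ∈ Finset.Icc ((m:ℤ)+1) N,
      (-(b:ℝ))^((m:ℤ)+1-k) * C ((s:ℤ)+1) (k-(m:ℤ)-1) * ((b:ℝ)*x)^k := by
    symm
    apply Finset.sum_subset (Finset.Icc_subset_Icc (by omega) le_rfl)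
    intro k hk hk2
    simp only [Finset.mem_Icc] at hk hk2
    rw [C_of_neg (show k-(m:ℤ)-1 < 0 by omega)]
    ring
  rw [hdrop]
  have hre : ∑ k ∈ Finset.Icc ((m:ℤ)+1) N,
      (-(b:ℝ))^((m:ℤ)+1-k) * C ((s:ℤ)+1) (k-(m:ℤ)-1) * ((b:ℝ)*x)^k
      = ∑ t ∈ Finset.Icc (0:ℤ) ((s:ℤ)+1),
        (-(b:ℝ))^(-t) * C ((s:ℤ)+1) t * (((b:ℝ)*x)^t * ((b:ℝ)*x)^((m:ℤ)+1)) := by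
    rw [show Finset.Icc ((m:ℤ)+1) N = Finset.Icc ((0:ℤ)+((m:ℤ)+1)) (((s:ℤ)+1)+((m:ℤ)+1))
        by congr 1 <;> omega]
    rw [sum_shift_mapc]
    apply Finset.sum_congr rfl
    intro t _
    rw [show (m:ℤ)+1-(t+((m:ℤ)+1)) = -t by ring, show t+((m:ℤ)+1)-(m:ℤ)-1 = t by ring,
      show t+((m:ℤ)+1) = t + ((m:ℤ)+1) by ring, zpow_add₀ hbx]
  rw [hre]
  have hcomb : ∀ t ∈ Finset.Icc (0:ℤ) ((s:ℤ)+1),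
      (-(b:ℝ))^(-t) * C ((s:ℤ)+1) t * (((b:ℝ)*x)^t * ((b:ℝ)*x)^((m:ℤ)+1))
      = ((b:ℝ)*x)^((m:ℤ)+1) * (C ((s:ℤ)+1) t * (-x)^t) := by
    intro t _
    have hy : (-(b:ℝ)) ≠ 0 := by simpa using hbR
    have hbase : (-(b:ℝ))⁻¹ * ((b:ℝ)*x) = -x := by
      rw [inv_mul_eq_div, div_eq_iff hy]
      ring
    have h1 : (-(b:ℝ))^(-t) * ((b:ℝ)*x)^t = (-x)^t := by
      rw [zpow_neg, ← inv_zpow, ← mul_zpow, hbase]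
    calc (-(b:ℝ))^(-t) * C ((s:ℤ)+1) t * (((b:ℝ)*x)^t * ((b:ℝ)*x)^((m:ℤ)+1))
        = ((b:ℝ)*x)^((m:ℤ)+1) * (C ((s:ℤ)+1) t * ((-(b:ℝ))^(-t) * ((b:ℝ)*x)^t)) := by ring
      _ = _ := by rw [h1]
  rw [Finset.sum_congr rfl hcomb, ← Finset.mul_sum]
  have hbinom : ∑ t ∈ Finset.Icc (0:ℤ) ((s:ℤ)+1), C ((s:ℤ)+1) t * (-x)^t
      = (1-x)^(s+1) := by
    have hz : (-x) ≠ 0 := by simpa using hx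
    have := binom (s+1) hz
    rw [show ((s+1:ℕ):ℤ) = (s:ℤ)+1 by push_cast; ring] at this
    rw [this, show (1:ℝ)+(-x) = 1-x by ring]
  rw [hbinom]
  have hpw : ((b:ℝ)*x)^((m:ℤ)+1) = ((b:ℝ)*x)^(m+1) := by
    rw [show (m:ℤ)+1 = ((m+1:ℕ):ℤ) by push_cast; ring, zpow_natCast]
  rw [hpw, mul_pow]
  field_simp
  ring


theorem G_third_order_recurrence (b m s : ℕ) (hb : 2 ≤ b) (hm : 1 ≤ m) (hs : 1 ≤ s)
    (x : ℝ) :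
    ((s : ℝ) + 2) * ((b : ℝ) * x - 1) * G b m (s + 3) x +
      ((m : ℝ) * ((b : ℝ) * x - 1) * (x - 1) + (b : ℝ) * (s : ℝ) * x * (x - 2) +
          (b : ℝ) * x * (x - 3) - (s : ℝ) * (2 * x - 3) - 3 * x + 5) * G b m (s + 2) x -
      (x - 1) * ((b : ℝ) * (m : ℝ) * x + (b : ℝ) * (s : ℝ) * x + (b : ℝ) * x +
          (m : ℝ) * x - 2 * (m : ℝ) + (s : ℝ) * x - 3 * (s : ℝ) + x - 4) * G b m (s + 1) x +
      (x - 1) ^ 2 * ((m : ℝ) + (s : ℝ) + 1) * G b m s x = 0 := by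

  have h1 := key2 b m s hb hm x
  have h2 := key2 b m (s+1) hb hm x
  rw [show ((m:ℤ)+((s+1:ℕ):ℤ)) = (m:ℤ)+(s:ℤ)+1 by push_cast; ring] at h2
  rw [show s+1+2 = s+3 by ring, show s+1+1 = s+2 by ring] at h2
  have hNat : (Nat.choose (m+s) (m-1)) * (m+s+1) = (Nat.choose (m+s+1) (m-1)) * (s+2) := by
    have h := Nat.choose_mul_succ_eq (m+s) (m-1)
    rw [show m+s+1-(m-1) = s+2 by omega] at h
    exact h
  have hC : ((s:ℝ)+2) * C ((m:ℤ)+(s:ℤ)+1) ((m:ℤ)-1)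
      = ((m:ℝ)+(s:ℝ)+1) * C ((m:ℤ)+(s:ℤ)) ((m:ℤ)-1) := by
    rw [C_eq_choose (by positivity) (by omega), C_eq_choose (by omega) (by omega)]
    rw [show ((m:ℤ)+(s:ℤ)+1).toNat = m+s+1 by omega, show ((m:ℤ)+(s:ℤ)).toNat = m+s by omega,
      show ((m:ℤ)-1).toNat = m-1 by omega]
    have : ((Nat.choose (m+s) (m-1)) * (m+s+1) : ℝ)
        = ((Nat.choose (m+s+1) (m-1)) * (s+2) : ℝ) := by exact_mod_cast congrArg (Nat.cast (R := ℝ)) hNat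
    push_cast at this ⊢
    linarith
  linear_combination (-((s:ℝ)+2)) * h2 + (((m:ℝ)+(s:ℝ)+1) * (1-x)) * h1
    - (((b:ℝ)-1) * (b:ℝ)^m * x^(m+1) * (1-x)^(s+2)) * hC
end

section
/- For all natural numbers b, m, s with b ≥ 2 and m, s ≥ 1, and all real x, G_s(x) splits as G_s(x) = G_s^{(1)}(x) + G_s^{(2)}(x), where G_s^{(1)}(x) := −Σ_{k=1}^{m+s−1} Σ_{r=1}^{s} C(s,r)·C(k−1,r−1)·((b−1)/b)^r·(bx)^k and G_s^{(2)}(x) := Σ_{k=m+1}^{m+s−1} Σ_{r=1}^{s} C(s,r)·C(k−1,r−1)·((1−b)/(−b)^r)·( Σ_{i=r−(k−m)}^{r−1} (−b)^i·C(r−1,i) )·(bx)^k, the innermost sum of G_s^{(2)} ranging over all integers i with r−(k−m) ≤ i ≤ r−1 (terms with i < 0 vanish since C(r−1,i) = 0 for i < 0). -/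
open Finset

/-- The first part `G_s^{(1)}(x)` of the split sum. -/
noncomputable def G1 (b m s : ℕ) (x : ℝ) : ℝ :=
  -∑ k ∈ Finset.Icc (1 : ℤ) ((m : ℤ) + (s : ℤ) - 1),
      ∑ r ∈ Finset.Icc (1 : ℤ) (s : ℤ),
        C (s : ℤ) r * C (k - 1) (r - 1) * (((b : ℝ) - 1) / (b : ℝ)) ^ r *
          ((b : ℝ) * x) ^ k

/-- The second part `G_s^{(2)}(x)` of the split sum. -/
noncomputable def G2 (b m s : ℕ) (x : ℝ) : ℝ :=
  ∑ k ∈ Finset.Icc ((m : ℤ) + 1) ((m : ℤ) + (s : ℤ) - 1),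
    ∑ r ∈ Finset.Icc (1 : ℤ) (s : ℤ),
      C (s : ℤ) r * C (k - 1) (r - 1) * ((1 - (b : ℝ)) / (-(b : ℝ)) ^ r) *
        (∑ i ∈ Finset.Icc (r - (k - (m : ℤ))) (r - 1), (-(b : ℝ)) ^ i * C (r - 1) i) *
        ((b : ℝ) * x) ^ k

lemma C_neg {n i : ℤ} (h : i < 0) : C n i = 0 := by
  simp [C]; omega

lemma sum_binom (B : ℝ) (n : ℕ) :
    ∑ i ∈ Finset.Icc (0:ℤ) (n:ℤ), B ^ i * C (n:ℤ) i = (B + 1) ^ n := by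
  have himg : Finset.Icc (0:ℤ) (n:ℤ)
      = Finset.map ⟨Int.ofNat, fun a b h => by simpa using h⟩ (Finset.range (n+1)) := by
    ext i
    simp [Finset.mem_map, Int.ofNat_eq_natCast]
    constructor
    · rintro ⟨h0, hn⟩
      exact ⟨i.toNat, by omega, show ((i.toNat : ℕ) : ℤ) = i by omega⟩
    · rintro ⟨j, hj, rfl⟩
      show 0 ≤ (j:ℤ) ∧ (j:ℤ) ≤ (n:ℤ)
      omega
  rw [himg, Finset.sum_map, add_pow]
  refine Finset.sum_congr rfl fun j hj => ?_
  simp only [Finset.mem_range] at hj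
  have : C (n:ℤ) (j:ℤ) = (n.choose j : ℝ) := by
    simp [C]; omega
  change B ^ (j:ℤ) * C (n:ℤ) (j:ℤ) = _
  simp only [Function.Embedding.coeFn_mk, Int.ofNat_eq_natCast, zpow_natCast, this, one_pow]
  ring

lemma sum_Ioc_split (f : ℤ → ℝ) (a b c : ℤ) (hab : a ≤ b) (hbc : b ≤ c) :
    ∑ i ∈ Finset.Ioc a c, f i = (∑ i ∈ Finset.Ioc a b, f i) + ∑ i ∈ Finset.Ioc b c, f i := by
  have hd : Disjoint (Finset.Ioc a b) (Finset.Ioc b c) := by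
    rw [Finset.disjoint_left]
    intro i hi hi'
    simp at hi hi'
    omega
  rw [← Finset.sum_union hd, Finset.Ioc_union_Ioc_eq_Ioc hab hbc]

lemma Icc_eq_Ioc (a b : ℤ) : Finset.Icc a b = Finset.Ioc (a-1) b := by
  ext i; simp

lemma split_sum (f : ℤ → ℝ) (h0 : ∀ i < 0, f i = 0) (r c : ℤ) (hr : 1 ≤ r) (hc : 0 ≤ c) :
    ∑ i ∈ Finset.Icc (0:ℤ) (r-1), f i
      = (∑ i ∈ Finset.Icc (0:ℤ) (r-1-c), f i) + ∑ i ∈ Finset.Icc (r-c) (r-1), f i := by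
  rw [Icc_eq_Ioc, Icc_eq_Ioc, Icc_eq_Ioc]
  have h1 : (0:ℤ) - 1 = -1 := by ring
  have h2 : r - c - 1 = r - 1 - c := by ring
  rw [h1, h2]
  rcases le_or_gt c r with h | h
  · exact sum_Ioc_split f _ _ _ (by omega) (by omega)
  · have e1 : Finset.Ioc (-1:ℤ) (r-1-c) = ∅ := by
      apply Finset.Ioc_eq_empty; omega
    rw [e1, Finset.sum_empty, zero_add]
    rw [sum_Ioc_split f (r-1-c) (-1) (r-1) (by omega) (by omega)]
    have : ∑ i ∈ Finset.Ioc (r-1-c) (-1:ℤ), f i = 0 := by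
      apply Finset.sum_eq_zero
      intro i hi
      simp at hi
      exact h0 i (by omega)
    rw [this, zero_add]

lemma key (B : ℝ) (hB : 1 < B) (r c : ℤ) (hr : 1 ≤ r) (hc : 0 ≤ c) :
    (B - 1) / (-B) ^ r * (∑ i ∈ Finset.Icc (0:ℤ) (r - 1 - c), (-B) ^ i * C (r-1) i)
    = -(((B - 1) / B) ^ r)
      + (1 - B) / (-B) ^ r * (∑ i ∈ Finset.Icc (r - c) (r - 1), (-B) ^ i * C (r-1) i) := by
  have split := split_sum (fun i => (-B) ^ i * C (r-1) i)
    (fun i hi => by simp [C_neg hi]) r c hr hc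
  set n : ℕ := (r-1).toNat with hn
  have hrn : r = (n : ℤ) + 1 := by omega
  have hfull : ∑ i ∈ Finset.Icc (0:ℤ) (r-1), (-B) ^ i * C (r-1) i = (1 - B) ^ n := by
    have h1 : r - 1 = (n : ℤ) := by omega
    rw [h1, sum_binom]
    ring_nf
  have hB0 : B ≠ 0 := by linarith
  have hnB0 : (-B) ≠ 0 := by intro h; apply hB0; linarith [neg_eq_zero.mp h]
  have hz1 : (-B) ^ r = (-B) ^ (n+1 : ℕ) := by
    rw [hrn, show ((n:ℤ)+1) = ((n+1 : ℕ) : ℤ) from by push_cast; ring, zpow_natCast]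
  have hz2 : ((B - 1) / B) ^ r = ((B - 1) / B) ^ (n+1 : ℕ) := by
    rw [hrn, show ((n:ℤ)+1) = ((n+1 : ℕ) : ℤ) from by push_cast; ring, zpow_natCast]
  set T := ∑ i ∈ Finset.Icc (r - c) (r - 1), (-B) ^ i * C (r-1) i with hT
  have hS : ∑ i ∈ Finset.Icc (0:ℤ) (r - 1 - c), (-B) ^ i * C (r-1) i = (1 - B) ^ n - T := by
    rw [hfull] at split; linarith
  rw [hS, hz1, hz2]
  have hd0 : (B - 1) / B = (1 - B) / (-B) := by
    rw [show (1 - B : ℝ) = -(B - 1) from by ring, neg_div_neg_eq]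
  rw [hd0, div_pow]
  have hpne : (-B) ^ (n+1 : ℕ) ≠ 0 := pow_ne_zero _ hnB0
  field_simp
  ring

theorem G_splits (b m s : ℕ) (hb : 2 ≤ b) (hm : 1 ≤ m) (hs : 1 ≤ s) (x : ℝ) :
    G b m s x = G1 b m s x + G2 b m s x := by
  have hb1 : (1:ℝ) < (b:ℝ) := by exact_mod_cast Nat.lt_of_lt_of_le one_lt_two hb
  unfold G G1 G2
  -- extend the G2 sum from Icc (m+1) (m+s-1) to Icc 1 (m+s-1)
  have hsub : Finset.Icc ((m:ℤ)+1) ((m:ℤ)+(s:ℤ)-1) ⊆ Finset.Icc (1:ℤ) ((m:ℤ)+(s:ℤ)-1) :=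
    Finset.Icc_subset_Icc (by omega) le_rfl
  rw [Finset.sum_subset hsub (by
    intro k hk hk'
    simp only [Finset.mem_Icc] at hk hk'
    apply Finset.sum_eq_zero
    intro r hr
    have he : Finset.Icc (r - (k - (m:ℤ))) (r - 1) = ∅ :=
      Finset.Icc_eq_empty (by omega)
    rw [he, Finset.sum_empty, mul_zero, zero_mul])]
  rw [← Finset.sum_neg_distrib, ← Finset.sum_add_distrib]
  refine Finset.sum_congr rfl fun k hk => ?_
  simp only [Finset.mem_Icc] at hk
  rw [Finset.sum_mul, ← Finset.sum_neg_distrib, ← Finset.sum_add_distrib]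
  refine Finset.sum_congr rfl fun r hr => ?_
  simp only [Finset.mem_Icc] at hr
  set c : ℤ := max (k - (m:ℤ)) 0 with hc
  have hc0 : 0 ≤ c := le_max_right _ _
  have hT : ∑ i ∈ Finset.Icc (r - (k - (m:ℤ))) (r - 1), (-(b:ℝ)) ^ i * C (r - 1) i
      = ∑ i ∈ Finset.Icc (r - c) (r - 1), (-(b:ℝ)) ^ i * C (r - 1) i := by
    rcases le_or_gt (m:ℤ) k with h | h
    · have : c = k - (m:ℤ) := max_eq_left (by omega)
      rw [this]
    · have e1 : Finset.Icc (r - (k - (m:ℤ))) (r - 1) = ∅ := Finset.Icc_eq_empty (by omega)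
      have e2 : Finset.Icc (r - c) (r - 1) = ∅ := Finset.Icc_eq_empty (by omega)
      rw [e1, e2]
  rw [hT]
  have hkey := key (b:ℝ) hb1 r c hr.1 hc0
  linear_combination (C (s:ℤ) r * C (k - 1) (r - 1) * ((b:ℝ) * x) ^ k) * hkey
end

section
/- For every natural number n, the sum f(n) := Σ_{k=5}^{n} C(n,k) satisfies the second-order homogeneous recurrence (n−3)·f(n+2) + (5−3n)·f(n+1) + 2(n+1)·f(n) = 0 (an identity of integers, where n−3 and 5−3n are taken in ℤ). -/
open Finset

lemma toy_sum_step (n : ℕ) :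
    ∑ k ∈ Finset.Icc 5 (n + 1), ((n + 1).choose k : ℤ) =
      2 * (∑ k ∈ Finset.Icc 5 n, (n.choose k : ℤ)) + (n.choose 4 : ℤ) := by
  have hmap : ∀ (f : ℕ → ℤ) (m : ℕ), ∑ k ∈ Finset.Icc 5 (m + 1), f k =
      ∑ j ∈ Finset.Icc 4 m, f (j + 1) := by
    intro f m
    have : Finset.Icc 5 (m + 1) = (Finset.Icc 4 m).map (addRightEmbedding 1) := by
      rw [Finset.map_add_right_Icc]
    rw [this, Finset.sum_map]
    rfl
  rw [hmap]
  have h2 : ∀ j ∈ Finset.Icc 4 n, ((n + 1).choose (j + 1) : ℤ) =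
      (n.choose j : ℤ) + (n.choose (j + 1) : ℤ) := by
    intro j _
    rw [Nat.choose_succ_succ]
    push_cast
    ring
  rw [Finset.sum_congr rfl h2, Finset.sum_add_distrib]
  have h3 : ∑ j ∈ Finset.Icc 4 n, (n.choose (j + 1) : ℤ) =
      ∑ k ∈ Finset.Icc 5 n, (n.choose k : ℤ) := by
    rw [← hmap (fun k => (n.choose k : ℤ)) n]
    rcases le_or_gt 5 (n + 1) with h | h
    · rw [Finset.sum_Icc_succ_top h, Nat.choose_succ_self, Nat.cast_zero, add_zero]
    · have h5 : Finset.Icc 5 (n + 1) = ∅ := Finset.Icc_eq_empty (by omega)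
      have h6 : Finset.Icc 5 n = ∅ := Finset.Icc_eq_empty (by omega)
      rw [h5, h6]
  rw [h3]
  have h4 : ∑ j ∈ Finset.Icc 4 n, (n.choose j : ℤ) =
      (n.choose 4 : ℤ) + ∑ k ∈ Finset.Icc 5 n, (n.choose k : ℤ) := by
    rcases le_or_gt 4 n with h | h
    · have hins : Finset.Icc 4 n = insert 4 (Finset.Icc 5 n) := by
        ext x
        simp only [Finset.mem_Icc, Finset.mem_insert]
        omega
      rw [hins, Finset.sum_insert (by simp)]
    · interval_cases n <;> decide
  rw [h4]; ring

lemma toy_choose4 (n : ℕ) :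
    ((n : ℤ) - 3) * ((n + 1).choose 4 : ℤ) = ((n : ℤ) + 1) * (n.choose 4 : ℤ) := by
  rcases le_or_gt 4 n with h | h
  · have key := Nat.choose_mul_succ_eq n 4
    have h2 : ((n : ℤ) - 3) = ((n + 1 - 4 : ℕ) : ℤ) := by omega
    rw [h2]
    have key2 : (n + 1 - 4) * (n + 1).choose 4 = (n + 1) * n.choose 4 := by
      rw [mul_comm, ← key, mul_comm]
    exact_mod_cast key2
  · interval_cases n <;> decide

theorem toy_sum_homogeneous_recurrence (n : ℕ) :
    ((n : ℤ) - 3) * (∑ k ∈ Finset.Icc 5 (n + 2), ((n + 2).choose k : ℤ)) +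
      (5 - 3 * (n : ℤ)) * (∑ k ∈ Finset.Icc 5 (n + 1), ((n + 1).choose k : ℤ)) +
      2 * ((n : ℤ) + 1) * (∑ k ∈ Finset.Icc 5 n, (n.choose k : ℤ)) = 0 := by
  have s1 := toy_sum_step n
  have s2 := toy_sum_step (n + 1)
  push_cast at s2 ⊢
  rw [s2, s1]
  have := toy_choose4 n
  push_cast at this
  nlinarith [this]
end
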